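/- For any integer r ≥ 0, the functions ϑ_r(x;y) = Σ_{i=0}^{r} q_{r−i}(x) e_i(y) satisfy the identity ϑ_r^2 + 2 Σ_{i=1}^{r} (−1)^i ϑ_{r+i} ϑ_{r−i} = e_r(y_1^2, …, y_k^2), where e_r denotes the elementary symmetric polynomial (and e_r(y^2) = 0 for r > k). -/

import Mathlib

/-!
STATEMENT 1: With `q r` defined by `∏ i (1+x i t)/(1-x i t) = ∑ q r t^r`,
`e i` the elementary symmetric polynomials in `y = (y 1, …, y k)` (zero for `i > k`),
and `ϑ r = ∑_{i=0}^r q (r-i) * e i`, one has for every `r ≥ 0`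
`ϑ r ^ 2 + 2 ∑_{i=1}^r (-1)^i ϑ (r+i) ϑ (r-i) = e_r(y_1^2, …, y_k^2)`.
We work in the polynomial ring in the variables `x` (indexed by `Fin n`, `n` arbitrary)
and `y` (indexed by `Fin k`).
-/

open PowerSeries

noncomputable section

variable (n k : ℕ)

/-- the variable `x i`. -/
def xv (i : Fin n) : MvPolynomial (Fin n ⊕ Fin k) ℚ := MvPolynomial.X (Sum.inl i)

/-- the variable `y j`. -/
def yv (j : Fin k) : MvPolynomial (Fin n ⊕ Fin k) ℚ := MvPolynomial.X (Sum.inr j)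

/-- the elementary symmetric polynomial `e_i(y)` (zero for `i > k`). -/
def ey (i : ℕ) : MvPolynomial (Fin n ⊕ Fin k) ℚ :=
  ∑ s ∈ Finset.univ.powersetCard i, ∏ j ∈ s, yv n k j

/-- the elementary symmetric polynomial in the squared variables, `e_r(y²)`. -/
def eySq (r : ℕ) : MvPolynomial (Fin n ⊕ Fin k) ℚ :=
  ∑ s ∈ Finset.univ.powersetCard r, ∏ j ∈ s, (yv n k j) ^ 2

/-- Coefficient of a product of factors `1 + a_j X^d`. -/
lemma aux_coeff_prod {R ι : Type*} [CommRing R] (s : Finset ι) (a : ι → R) (d m : ℕ) :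
    PowerSeries.coeff m (∏ j ∈ s, (1 + PowerSeries.C (a j) * PowerSeries.X ^ d)) =
      ∑ t ∈ s.powerset.filter (fun t => m = d * t.card), ∏ j ∈ t, a j := by
  classical
  have h : ∀ j ∈ s, ((1 : R⟦X⟧) + C (a j) * X ^ d) = (fun j => C (a j) * X ^ d) j + 1 :=
    fun _ _ => add_comm _ _
  rw [Finset.prod_congr rfl h, Finset.prod_add]
  simp only [Finset.prod_const_one, mul_one]
  rw [map_sum, Finset.sum_filter]
  refine Finset.sum_congr rfl fun t _ => ?_
  rw [Finset.prod_mul_distrib, ← map_prod, Finset.prod_const, ← pow_mul,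
    coeff_C_mul, coeff_X_pow]
  split_ifs <;> simp

/-- Folding a symmetric sum. -/
lemma aux_sum {R : Type*} [CommRing R] (θ : ℕ → R) (r : ℕ) :
    ∑ i ∈ Finset.range (2*r+1), θ i * ((-1 : R)^(2*r - i) * θ (2*r - i)) =
      (-1 : R)^r * (θ r ^ 2 +
        2 * ∑ i ∈ Finset.range r, (-1)^(i+1) * θ (r+(i+1)) * θ (r-(i+1))) := by
  have h1 : 2*r+1 = r + (r+1) := by omega
  rw [h1, Finset.sum_range_add, Finset.sum_range_succ']
  have e1 : ∀ i ∈ Finset.range r,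
      θ i * ((-1 : R)^(2*r - i) * θ (2*r - i)) =
      (-1)^r * ((-1)^((r - 1 - i)+1) * θ (r + ((r-1-i)+1)) * θ (r - ((r-1-i)+1))) := by
    intro i hi
    have hi' : i < r := Finset.mem_range.mp hi
    have h2 : r - ((r-1-i)+1) = i := by omega
    have h3 : r + ((r-1-i)+1) = 2*r - i := by omega
    have h4 : 2*r - i = r + ((r-1-i)+1) := by omega
    rw [h2, h3, h4, pow_add]
    ring
  have e2 : ∀ i ∈ Finset.range r,
      θ (r + (i+1)) * ((-1 : R)^(2*r - (r + (i+1))) * θ (2*r - (r + (i+1)))) =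
      (-1)^r * ((-1)^(i+1) * θ (r + (i+1)) * θ (r - (i+1))) := by
    intro i hi
    have hi' : i < r := Finset.mem_range.mp hi
    have h2 : 2*r - (r + (i+1)) = r - (i+1) := by omega
    have h3 : (r - (i+1)) + 2*(i+1) = r + (i + 1) := by omega
    rw [h2]
    have h5 : (-1 : R)^(r - (i+1)) = (-1)^(r + (i+1)) := by
      rw [← h3, pow_add, pow_mul]; simp
    rw [h5, pow_add]
    ring
  rw [Finset.sum_congr rfl e1]
  rw [Finset.sum_congr rfl e2]
  have h6 : θ (r + 0) * ((-1 : R)^(2*r - (r+0)) * θ (2*r - (r+0))) = (-1)^r * θ r ^ 2 := by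
    have : 2*r - (r+0) = r := by omega
    rw [this]; ring
  rw [h6]
  simp only [← Finset.mul_sum]
  rw [Finset.sum_range_reflect (fun i => (-1 : R)^(i+1) * θ (r+(i+1)) * θ (r-(i+1))) r]
  ring

lemma rescale_one_add {R : Type*} [CommRing R] (c : R) :
    rescale (-1 : R) (1 + C c * X) = 1 - C c * X := by
  ext m
  rw [coeff_rescale]
  rcases m with _ | m
  · simp
  rcases m with _ | m
  · simp [coeff_one, coeff_X, coeff_C_mul, pow_succ]
  · simp [coeff_one, coeff_X, coeff_C_mul]

lemma rescale_one_sub {R : Type*} [CommRing R] (c : R) :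
    rescale (-1 : R) (1 - C c * X) = 1 + C c * X := by
  have := congrArg (rescale (-1 : R)) (rescale_one_add c)
  rw [PowerSeries.rescale_rescale, show ((-1 : R) * (-1)) = 1 by ring,
    PowerSeries.rescale_one] at this
  exact this.symm

theorem stmt1
    (q : ℕ → MvPolynomial (Fin n ⊕ Fin k) ℚ)
    (hq : (∏ i : Fin n,
        (1 - PowerSeries.C (R := MvPolynomial (Fin n ⊕ Fin k) ℚ) (xv n k i) * PowerSeries.X)) *
        PowerSeries.mk q =
      ∏ i : Fin n,
        (1 + PowerSeries.C (R := MvPolynomial (Fin n ⊕ Fin k) ℚ) (xv n k i) * PowerSeries.X))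
    (theta : ℕ → MvPolynomial (Fin n ⊕ Fin k) ℚ)
    (htheta : ∀ r : ℕ, theta r = ∑ i ∈ Finset.range (r + 1), q (r - i) * ey n k i) :
    ∀ r : ℕ,
      theta r ^ 2 +
        2 * ∑ i ∈ Finset.range r, (-1) ^ (i + 1) * theta (r + (i + 1)) * theta (r - (i + 1)) =
      eySq n k r := by
  classical
  set P : (MvPolynomial (Fin n ⊕ Fin k) ℚ)⟦X⟧ := ∏ i : Fin n, (1 - C (R := MvPolynomial (Fin n ⊕ Fin k) ℚ) (xv n k i) * X) with hP
  set Pb : (MvPolynomial (Fin n ⊕ Fin k) ℚ)⟦X⟧ := ∏ i : Fin n, (1 + C (R := MvPolynomial (Fin n ⊕ Fin k) ℚ) (xv n k i) * X) with hPb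
  set E : (MvPolynomial (Fin n ⊕ Fin k) ℚ)⟦X⟧ := ∏ j : Fin k, (1 + C (R := MvPolynomial (Fin n ⊕ Fin k) ℚ) (yv n k j) * X) with hEdef
  -- rescale swaps P and Pb
  have hresP : rescale (-1 : MvPolynomial (Fin n ⊕ Fin k) ℚ) P = Pb := by
    rw [hP, hPb, map_prod]
    exact Finset.prod_congr rfl fun i _ => rescale_one_sub _
  have hresPb : rescale (-1 : MvPolynomial (Fin n ⊕ Fin k) ℚ) Pb = P := by
    rw [hP, hPb, map_prod]
    exact Finset.prod_congr rfl fun i _ => rescale_one_add _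
  have hq2 : Pb * rescale (-1 : MvPolynomial (Fin n ⊕ Fin k) ℚ) (mk q) = P := by
    have := congrArg (rescale (-1 : MvPolynomial (Fin n ⊕ Fin k) ℚ)) hq
    rwa [map_mul, hresP, hresPb] at this
  have hPne : P ≠ 0 := by
    intro h
    have h0 := congrArg (constantCoeff (R := MvPolynomial (Fin n ⊕ Fin k) ℚ)) h
    rw [hP, map_prod, map_zero] at h0
    simp only [map_sub, map_mul, map_one, constantCoeff_C, constantCoeff_X, mul_zero,
      sub_zero, Finset.prod_const_one] at h0
    exact one_ne_zero h0
  have hcancel : mk q * rescale (-1 : MvPolynomial (Fin n ⊕ Fin k) ℚ) (mk q) = 1 := by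
    apply mul_left_cancel₀ hPne
    calc P * (mk q * rescale (-1 : MvPolynomial (Fin n ⊕ Fin k) ℚ) (mk q))
        = (P * mk q) * rescale (-1 : MvPolynomial (Fin n ⊕ Fin k) ℚ) (mk q) := by ring
      _ = Pb * rescale (-1 : MvPolynomial (Fin n ⊕ Fin k) ℚ) (mk q) := by rw [hq]
      _ = P := hq2
      _ = P * 1 := by ring
  -- coefficients of E
  have hE : ∀ m, coeff (R := MvPolynomial (Fin n ⊕ Fin k) ℚ) m E = ey n k m := by
    intro m
    have h := aux_coeff_prod (Finset.univ : Finset (Fin k)) (fun j => yv n k j) 1 m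
    simp only [pow_one] at h
    rw [hEdef, h, ey, Finset.powersetCard_eq_filter]
    refine Finset.sum_congr ?_ fun _ _ => rfl
    ext t
    simp [eq_comm]
  -- mk theta = mk q * E
  have hT : PowerSeries.mk theta = PowerSeries.mk q * E := by
    refine PowerSeries.ext fun m => ?_
    rw [coeff_mk, coeff_mul, Finset.Nat.sum_antidiagonal_eq_sum_range_succ
      (fun a b => coeff (R := MvPolynomial (Fin n ⊕ Fin k) ℚ) a (mk q) * coeff (R := MvPolynomial (Fin n ⊕ Fin k) ℚ) b E), htheta m]
    simp only [coeff_mk, hE, Nat.succ_eq_add_one]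
    rw [← Finset.sum_range_reflect (fun i => q (m - i) * ey n k i) (m+1)]
    refine Finset.sum_congr rfl fun i hi => ?_
    have hi' : i < m + 1 := Finset.mem_range.mp hi
    have h2 : m + 1 - 1 - i = m - i := by omega
    have h1 : m - (m - i) = i := by omega
    simp only [h2, h1]
  -- the key generating function identity
  have hTT : PowerSeries.mk theta * rescale (-1 : MvPolynomial (Fin n ⊕ Fin k) ℚ) (PowerSeries.mk theta)
      = ∏ j : Fin k, (1 + C (R := MvPolynomial (Fin n ⊕ Fin k) ℚ) (-(yv n k j ^ 2)) * X ^ 2) := by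
    have hrE : rescale (-1 : MvPolynomial (Fin n ⊕ Fin k) ℚ) E = ∏ j : Fin k, (1 - C (R := MvPolynomial (Fin n ⊕ Fin k) ℚ) (yv n k j) * X) := by
      rw [hEdef, map_prod]
      exact Finset.prod_congr rfl fun j _ => rescale_one_add _
    calc PowerSeries.mk theta * rescale (-1 : MvPolynomial (Fin n ⊕ Fin k) ℚ) (PowerSeries.mk theta)
        = (mk q * E) * (rescale (-1 : MvPolynomial (Fin n ⊕ Fin k) ℚ) (mk q) * rescale (-1 : MvPolynomial (Fin n ⊕ Fin k) ℚ) E) := by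
          rw [hT, map_mul]
      _ = (mk q * rescale (-1 : MvPolynomial (Fin n ⊕ Fin k) ℚ) (mk q)) *
            (E * (∏ j : Fin k, (1 - C (R := MvPolynomial (Fin n ⊕ Fin k) ℚ) (yv n k j) * X))) := by rw [hrE]; ring
      _ = E * ∏ j : Fin k, (1 - C (R := MvPolynomial (Fin n ⊕ Fin k) ℚ) (yv n k j) * X) := by rw [hcancel, one_mul]
      _ = ∏ j : Fin k, ((1 + C (R := MvPolynomial (Fin n ⊕ Fin k) ℚ) (yv n k j) * X) * (1 - C (R := MvPolynomial (Fin n ⊕ Fin k) ℚ) (yv n k j) * X)) := by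
          rw [hEdef, ← Finset.prod_mul_distrib]
      _ = ∏ j : Fin k, (1 + C (R := MvPolynomial (Fin n ⊕ Fin k) ℚ) (-(yv n k j ^ 2)) * X ^ 2) := by
          refine Finset.prod_congr rfl fun j _ => ?_
          rw [map_neg, map_pow]
          ring
  -- extract the coefficient of `X ^ (2r)`
  intro r
  have h2r := congrArg (coeff (R := MvPolynomial (Fin n ⊕ Fin k) ℚ) (2*r)) hTT
  rw [coeff_mul, Finset.Nat.sum_antidiagonal_eq_sum_range_succ
    (fun a b => coeff (R := MvPolynomial (Fin n ⊕ Fin k) ℚ) a (mk theta) * coeff (R := MvPolynomial (Fin n ⊕ Fin k) ℚ) b (rescale (-1 : MvPolynomial (Fin n ⊕ Fin k) ℚ) (mk theta)))] at h2r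
  simp only [coeff_mk, coeff_rescale, Nat.succ_eq_add_one] at h2r
  rw [aux_sum theta r] at h2r
  have hRHS : coeff (R := MvPolynomial (Fin n ⊕ Fin k) ℚ) (2*r) (∏ j : Fin k, (1 + C (R := MvPolynomial (Fin n ⊕ Fin k) ℚ) (-(yv n k j ^ 2)) * X ^ 2))
      = (-1)^r * eySq n k r := by
    rw [aux_coeff_prod (Finset.univ : Finset (Fin k)) (fun j => -(yv n k j ^ 2)) 2 (2*r)]
    have hfil : (Finset.univ.powerset.filter (fun t : Finset (Fin k) => 2*r = 2 * t.card))
        = Finset.univ.powersetCard r := by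
      rw [Finset.powersetCard_eq_filter]
      ext t
      simp only [Finset.mem_filter, Finset.mem_powerset]
      constructor
      · rintro ⟨h1, h2⟩; exact ⟨h1, by omega⟩
      · rintro ⟨h1, h2⟩; exact ⟨h1, by omega⟩
    rw [hfil, eySq, Finset.mul_sum]
    refine Finset.sum_congr rfl fun t ht => ?_
    have hc : t.card = r := (Finset.mem_powersetCard.mp ht).2
    calc (∏ j ∈ t, -(yv n k j ^ 2))
        = ∏ j ∈ t, ((-1) * yv n k j ^ 2) := by simp only [neg_one_mul]
      _ = (-1)^t.card * ∏ j ∈ t, yv n k j ^ 2 := by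
          rw [Finset.prod_mul_distrib, Finset.prod_const]
      _ = (-1)^r * ∏ j ∈ t, yv n k j ^ 2 := by rw [hc]
  rw [hRHS] at h2r
  have hne : ((-1 : MvPolynomial (Fin n ⊕ Fin k) ℚ)^r) ≠ 0 := pow_ne_zero _ (neg_ne_zero.mpr one_ne_zero)
  exact mul_left_cancel₀ hne h2r

end
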